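/- Let (X,d) be a bounded metric space with Samuel compactification (S(X), τ, ∂). For any nonempty τ-open subsets U, V of S(X), one has ∂(cl_τ(U), cl_τ(V)) = ∂(U, V) = d(U ∩ X, V ∩ X), where X is identified with its image in S(X) under the evaluation embedding. -/

import Mathlib

open scoped BoundedContinuousFunction
noncomputable section

variable (X : Type*) [MetricSpace X]

/-- The star subalgebra of bounded *uniformly continuous* complex-valued functions
inside the C*-algebra of bounded continuous functions. -/
def UCB : StarSubalgebra ℂ (X →ᵇ ℂ) where
  carrier := {f | UniformContinuous ⇑f}
  mul_mem' := by
    intro a b ha hb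
    simp only [Set.mem_setOf_eq] at *
    have hbd : Bornology.IsBounded (Set.range fun x => ((a x : ℂ), (b x : ℂ))) := by
      refine Bornology.IsBounded.subset ((a.isBounded_range).prod (b.isBounded_range)) ?_
      rintro p ⟨x, rfl⟩
      exact ⟨⟨x, rfl⟩, ⟨x, rfl⟩⟩
    set K := closure (Set.range fun x => ((a x : ℂ), (b x : ℂ))) with hK
    have hKc : IsCompact K := hbd.isCompact_closure
    haveI : CompactSpace K := isCompact_iff_compactSpace.mp hKc
    have hmul : UniformContinuous fun p : K => (p : ℂ × ℂ).1 * (p : ℂ × ℂ).2 :=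
      CompactSpace.uniformContinuous_of_continuous
        ((continuous_fst.comp continuous_subtype_val).mul
          (continuous_snd.comp continuous_subtype_val))
    have hF : UniformContinuous fun x : X => (⟨(a x, b x), subset_closure ⟨x, rfl⟩⟩ : K) :=
      (ha.prodMk hb).subtype_mk _
    have : UniformContinuous fun x : X => a x * b x := hmul.comp hF
    exact this
  one_mem' := by
    exact (uniformContinuous_const : UniformContinuous fun _ : X => (1 : ℂ))
  add_mem' := by
    intro a b ha hb
    simp only [Set.mem_setOf_eq] at *
    exact ha.add hb
  zero_mem' := by
    exact (uniformContinuous_const : UniformContinuous fun _ : X => (0 : ℂ))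
  algebraMap_mem' := by
    intro c
    have : ⇑(algebraMap ℂ (X →ᵇ ℂ) c) = fun _ : X => c := by
      ext x; simp [Algebra.algebraMap_eq_smul_one]
    simp only [Set.mem_setOf_eq, this]
    exact uniformContinuous_const
  star_mem' := by
    intro a ha
    simp only [Set.mem_setOf_eq] at *
    have : UniformContinuous fun x : X => (starRingEnd ℂ) (a x) :=
      (Complex.isometry_conj.uniformContinuous).comp ha
    exact this

/-- The Samuel compactification of a metric space `X`: the character space (Gelfand spectrum)
of the algebra of bounded uniformly continuous functions, with the weak* topology. -/
def Samuel : Type _ := WeakDual.characterSpace ℂ (UCB X)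

instance : TopologicalSpace (Samuel X) := by unfold Samuel; infer_instance

instance : FunLike (Samuel X) (UCB X) ℂ := by unfold Samuel; infer_instance

/-- Evaluation at a point of `X`, as a continuous linear functional on `UCB X`. -/
def samuelEvalCLM (x : X) : WeakDual ℂ (UCB X) :=
  LinearMap.mkContinuous
    { toFun := fun f => (f : X →ᵇ ℂ) x
      map_add' := fun f g => by simp
      map_smul' := fun c f => by simp } 1
    (fun f => by rw [one_mul]; exact BoundedContinuousFunction.norm_coe_le_norm (f : X →ᵇ ℂ) x)

lemma samuelEvalCLM_apply (x : X) (f : UCB X) : samuelEvalCLM X x f = (f : X →ᵇ ℂ) x := rfl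

/-- Evaluation at a point of `X`, as a character of `UCB X`:
this is the canonical embedding of `X` into its Samuel compactification. -/
def samuelEmbed (x : X) : Samuel X :=
  ⟨samuelEvalCLM X x, by
    refine ⟨fun h => ?_, fun f g => ?_⟩
    · have h1 : samuelEvalCLM X x 1 = 0 := by rw [h]; rfl
      have h2 : samuelEvalCLM X x 1 = 1 := rfl
      rw [h1] at h2
      exact zero_ne_one h2
    · simp only [samuelEvalCLM_apply]
      simp⟩

/-- The bounded `1`-Lipschitz real-valued functions on `X`. -/
def Lip1 : Type _ := {f : X →ᵇ ℝ // LipschitzWith 1 ⇑f}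

/-- A bounded `1`-Lipschitz real function, regarded as an element of `UCB X`. -/
def toUCB (f : Lip1 X) : UCB X :=
  ⟨BoundedContinuousFunction.comp Complex.ofReal
      (Complex.isometry_ofReal.lipschitz) f.1,
   by
     have : UniformContinuous fun x : X => (f.1 x : ℂ) :=
       Complex.isometry_ofReal.uniformContinuous.comp f.2.uniformContinuous
     exact this⟩

/-- The topometric distance `∂` on the Samuel compactification:
`∂(a,b) = sup {|a(f) - b(f)| : f : X → ℝ bounded and 1-Lipschitz}`. -/
def samuelDist (a b : Samuel X) : ℝ :=
  ⨆ f : Lip1 X, ‖a (toUCB X f) - b (toUCB X f)‖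

/-- The `∂`-gap between two subsets of the Samuel compactification. -/
def samuelSetDist (A B : Set (Samuel X)) : ℝ :=
  sInf {r | ∃ a ∈ A, ∃ b ∈ B, r = samuelDist X a b}

/-- The `d`-gap between two subsets of the metric space `X`. -/
def metricSetDist (A B : Set X) : ℝ :=
  sInf {r | ∃ a ∈ A, ∃ b ∈ B, r = dist a b}


/-! ### Auxiliary development -/

instance UCB.isClosed_carrier : IsClosed ((UCB X : Set (X →ᵇ ℂ))) := by
  have : ((UCB X : Set (X →ᵇ ℂ))) = {f : X →ᵇ ℂ | UniformContinuous ⇑f} := rfl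
  rw [this, ← closure_subset_iff_isClosed]
  intro f hf
  show UniformContinuous ⇑f
  rw [Metric.uniformContinuous_iff]
  intro ε hε
  obtain ⟨g, hg, hfg⟩ := Metric.mem_closure_iff.mp hf (ε/3) (by linarith)
  obtain ⟨δ, hδ, hgδ⟩ := Metric.uniformContinuous_iff.mp hg (ε/3) (by linarith)
  refine ⟨δ, hδ, fun {x y} hxy => ?_⟩
  have h1 := BoundedContinuousFunction.dist_coe_le_dist (f := f) (g := g) x
  have h2 := BoundedContinuousFunction.dist_coe_le_dist (f := f) (g := g) y
  have h3 := hgδ hxy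
  calc dist (f x) (f y) ≤ dist (f x) (g x) + dist (g x) (g y) + dist (g y) (f y) :=
        dist_triangle4 _ _ _ _
    _ < ε := by rw [dist_comm (g y)]; linarith

example : CommCStarAlgebra (UCB X) := inferInstance
example : CompactSpace (WeakDual.characterSpace ℂ (UCB X)) := inferInstance
example : T2Space (WeakDual.characterSpace ℂ (UCB X)) := inferInstance

/-- View an element of the Samuel compactification as a character. -/
def toChar (a : Samuel X) : WeakDual.characterSpace ℂ (UCB X) := a

lemma toChar_apply (a : Samuel X) (f : UCB X) : a f = toChar X a f := rfl

lemma samuelEmbed_apply (x : X) (f : UCB X) : samuelEmbed X x f = (f : X →ᵇ ℂ) x := rfl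

instance : CompactSpace (Samuel X) := by unfold Samuel; infer_instance
instance : T2Space (Samuel X) := by unfold Samuel; infer_instance

lemma denseRange_samuelEmbed : DenseRange (samuelEmbed X) := by
  by_contra h
  rw [DenseRange, dense_iff_closure_eq] at h
  obtain ⟨p, hp⟩ : ∃ p : Samuel X, p ∉ closure (Set.range (samuelEmbed X)) := by
    by_contra h'; push_neg at h'; exact h (Set.eq_univ_of_forall h')
  obtain ⟨g, hg0, hg1, -⟩ := exists_continuous_zero_one_of_isClosed
    isClosed_closure (isClosed_singleton (x := p))
    (Set.disjoint_singleton_right.mpr hp)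
  set gC : C(Samuel X, ℂ) := (ContinuousMap.mk Complex.ofReal Complex.continuous_ofReal).comp g
    with hgC
  obtain ⟨f, hf⟩ := (gelfandTransform_bijective (UCB X)).2 gC
  have hfx : ∀ x : X, (f : X →ᵇ ℂ) x = 0 := by
    intro x
    have h3 : gC (samuelEmbed X x) = 0 := by
      have : g (samuelEmbed X x) = 0 := hg0 (subset_closure ⟨x, rfl⟩)
      simp [hgC, this]
    calc (f : X →ᵇ ℂ) x = gC (samuelEmbed X x) := by rw [← hf]; rfl
      _ = 0 := h3
  have hf0 : f = 0 := by
    ext1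
    ext x
    simpa using hfx x
  have h4 : gC p = 0 := by rw [← hf, hf0, map_zero]; rfl
  have h5 : gC p = 1 := by
    have h6 : g p = (1 : ℝ) := hg1 rfl
    simp [hgC, h6]
  rw [h4] at h5
  exact zero_ne_one h5

variable {X}

lemma samuelDist_nonneg (a b : Samuel X) : 0 ≤ samuelDist X a b :=
  Real.iSup_nonneg fun _ => norm_nonneg _

lemma toUCB_apply (f : Lip1 X) (x : X) : ((toUCB X f : X →ᵇ ℂ)) x = (f.1 x : ℂ) := rfl

lemma samuelDist_le_dist (x y : X) :
    samuelDist X (samuelEmbed X x) (samuelEmbed X y) ≤ dist x y := by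
  refine Real.iSup_le (fun f => ?_) dist_nonneg
  show ‖((f.1 x : ℂ)) - (f.1 y : ℂ)‖ ≤ dist x y
  rw [← Complex.ofReal_sub, Complex.norm_real, Real.norm_eq_abs, ← Real.dist_eq]
  simpa using f.2.dist_le_mul x y

lemma samuelDist_apply_le (hbdd : Bornology.IsBounded (Set.univ : Set X)) (x₀ : X)
    (a b : Samuel X) (f : Lip1 X) :
    ‖a (toUCB X f) - b (toUCB X f)‖ ≤ 2 * Metric.diam (Set.univ : Set X) := by
  set g : UCB X := toUCB X f - algebraMap ℂ (UCB X) ((f.1 x₀ : ℂ)) with hg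
  have hgnorm : ‖g‖ ≤ Metric.diam (Set.univ : Set X) := by
    show ‖(g : X →ᵇ ℂ)‖ ≤ Metric.diam (Set.univ : Set X)
    refine (BoundedContinuousFunction.norm_le Metric.diam_nonneg).mpr fun x => ?_
    show ‖((f.1 x : ℂ)) - (f.1 x₀ : ℂ)‖ ≤ Metric.diam (Set.univ : Set X)
    rw [← Complex.ofReal_sub, Complex.norm_real, Real.norm_eq_abs, ← Real.dist_eq]
    calc dist (f.1 x) (f.1 x₀) ≤ dist x x₀ := by simpa using f.2.dist_le_mul x x₀
      _ ≤ _ := Metric.dist_le_diam_of_mem hbdd trivial trivial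
  have hone : ‖(1 : UCB X)‖ ≤ 1 := by
    show ‖((1 : UCB X) : X →ᵇ ℂ)‖ ≤ 1
    refine (BoundedContinuousFunction.norm_le zero_le_one).mpr fun x => ?_
    show ‖(1 : ℂ)‖ ≤ 1
    simp
  have key : ∀ c : Samuel X, c (toUCB X f) = toChar X c g + (f.1 x₀ : ℂ) := by
    intro c
    rw [hg, map_sub, AlgHomClass.commutes]
    simp [← toChar_apply, Algebra.algebraMap_self]
  have hnorm : ∀ c : Samuel X, ‖toChar X c g‖ ≤ Metric.diam (Set.univ : Set X) := by
    intro c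
    calc ‖toChar X c g‖ ≤ ‖g‖ * ‖(1 : UCB X)‖ :=
          AlgHom.norm_apply_le_self_mul_norm_one (toChar X c) g
      _ ≤ Metric.diam (Set.univ : Set X) * 1 :=
          mul_le_mul hgnorm hone (norm_nonneg _) Metric.diam_nonneg
      _ = _ := mul_one _
  rw [key a, key b]
  calc ‖toChar X a g + (f.1 x₀ : ℂ) - (toChar X b g + (f.1 x₀ : ℂ))‖
      = ‖toChar X a g - toChar X b g‖ := by ring_nf
    _ ≤ ‖toChar X a g‖ + ‖toChar X b g‖ := norm_sub_le _ _
    _ ≤ _ := by have := hnorm a; have := hnorm b; linarith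

lemma metricSetDist_nonneg (A B : Set X) : 0 ≤ metricSetDist X A B := by
  apply Real.sInf_nonneg
  rintro r ⟨x, -, y, -, rfl⟩
  exact dist_nonneg

lemma metric_le_samuelDist (hbdd : Bornology.IsBounded (Set.univ : Set X))
    {A B : Set X} (hA : A.Nonempty) (hB : B.Nonempty)
    {a b : Samuel X} (ha : a ∈ closure (samuelEmbed X '' A))
    (hb : b ∈ closure (samuelEmbed X '' B)) :
    metricSetDist X A B ≤ samuelDist X a b := by
  obtain ⟨x₀, hx₀⟩ := id hA
  set s₀ := metricSetDist X A B with hs₀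
  -- the 1-Lipschitz bounded function x ↦ infDist x A
  set F : Lip1 X :=
    ⟨BoundedContinuousFunction.mkOfBound
        ⟨fun x => Metric.infDist x A, Metric.continuous_infDist_pt A⟩
        (Metric.diam (Set.univ : Set X))
        (fun x y => le_trans (by simpa using (Metric.lipschitz_infDist_pt A).dist_le_mul x y)
          (Metric.dist_le_diam_of_mem hbdd trivial trivial)),
      Metric.lipschitz_infDist_pt A⟩ with hF
  have hFval : ∀ x : X, F.1 x = Metric.infDist x A := fun _ => rfl
  -- evaluation at `toUCB X F` is continuous
  have hcont : Continuous fun c : Samuel X => c (toUCB X F) := by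
    show Continuous fun c : WeakDual.characterSpace ℂ (UCB X) =>
      (c : WeakDual ℂ (UCB X)) (toUCB X F)
    exact (WeakDual.eval_continuous (toUCB X F)).comp continuous_subtype_val
  -- value at a is 0
  have haval : a (toUCB X F) = 0 := by
    have h1 : a (toUCB X F) ∈ closure ({0} : Set ℂ) := by
      refine map_mem_closure (f := fun c : Samuel X => c (toUCB X F)) hcont ha ?_
      rintro - ⟨x, hx, rfl⟩
      show ((F.1 x : ℂ)) ∈ ({0} : Set ℂ)
      simp [hFval, Metric.infDist_zero_of_mem hx]
    simpa using h1
  -- value at b has real part ≥ s₀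
  have hs₀le : ∀ y ∈ B, s₀ ≤ Metric.infDist y A := by
    intro y hy
    by_contra h
    push_neg at h
    obtain ⟨x, hx, hd⟩ := (Metric.infDist_lt_iff hA).mp h
    have hbb : BddBelow {r | ∃ a ∈ A, ∃ b ∈ B, r = dist a b} := by
      refine ⟨0, ?_⟩; rintro r ⟨u, -, v, -, rfl⟩; exact dist_nonneg
    have hle : s₀ ≤ dist x y := csInf_le hbb ⟨x, hx, y, hy, rfl⟩
    rw [dist_comm x y] at hle
    exact absurd hd (not_lt.mpr hle)
  have hbval : s₀ ≤ (b (toUCB X F)).re := by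
    have h1 : b (toUCB X F) ∈ closure {z : ℂ | s₀ ≤ z.re} := by
      refine map_mem_closure (f := fun c : Samuel X => c (toUCB X F)) hcont hb ?_
      rintro - ⟨y, hy, rfl⟩
      show ((F.1 y : ℂ)) ∈ {z : ℂ | s₀ ≤ z.re}
      simp only [Set.mem_setOf_eq, Complex.ofReal_re]
      rw [hFval]
      exact hs₀le y hy
    have h2 : IsClosed {z : ℂ | s₀ ≤ z.re} := isClosed_Ici.preimage Complex.continuous_re
    rw [h2.closure_eq] at h1
    exact h1
  -- conclude
  have hbdd' : BddAbove (Set.range fun f : Lip1 X => ‖a (toUCB X f) - b (toUCB X f)‖) := by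
    refine ⟨2 * Metric.diam (Set.univ : Set X), ?_⟩
    rintro - ⟨f, rfl⟩
    exact samuelDist_apply_le hbdd x₀ a b f
  calc s₀ ≤ (b (toUCB X F)).re := hbval
    _ ≤ ‖b (toUCB X F)‖ := Complex.re_le_norm _
    _ = ‖a (toUCB X F) - b (toUCB X F)‖ := by rw [haval, zero_sub, norm_neg]
    _ ≤ samuelDist X a b := le_ciSup hbdd' F

variable (X)

/-- **Lemma on gaps between open sets in the Samuel compactification.**
If `(X,d)` is a bounded metric space and `U`, `V` are nonempty open subsets of the Samuel
compactification `S(X)`, then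
`∂(cl U, cl V) = ∂(U, V) = d(U ∩ X, V ∩ X)`,
where `X` is identified with its image in `S(X)` under the evaluation embedding. -/
theorem samuel_setDist_closure_eq (hbdd : Bornology.IsBounded (Set.univ : Set X))
    (U V : Set (Samuel X)) (hU : IsOpen U) (hV : IsOpen V)
    (hUne : U.Nonempty) (hVne : V.Nonempty) :
    samuelSetDist X (closure U) (closure V) = samuelSetDist X U V ∧
      samuelSetDist X U V =
        metricSetDist X (samuelEmbed X ⁻¹' U) (samuelEmbed X ⁻¹' V) := by
  set A := samuelEmbed X ⁻¹' U with hA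
  set B := samuelEmbed X ⁻¹' V
  have hdense := denseRange_samuelEmbed X
  have hAne : A.Nonempty := by
    obtain ⟨u, huU, x, rfl⟩ := hdense.inter_open_nonempty U hU hUne
    exact ⟨x, huU⟩
  have hBne : B.Nonempty := by
    obtain ⟨u, huV, x, rfl⟩ := hdense.inter_open_nonempty V hV hVne
    exact ⟨x, huV⟩
  have hclosU : closure U ⊆ closure (samuelEmbed X '' A) := by
    have h1 : U ⊆ closure (U ∩ Set.range (samuelEmbed X)) :=
      hdense.open_subset_closure_inter hU
    calc closure U ⊆ closure (closure (U ∩ Set.range (samuelEmbed X))) := closure_mono h1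
      _ = closure (U ∩ Set.range (samuelEmbed X)) := closure_closure
      _ = closure (samuelEmbed X '' A) := by rw [Set.image_preimage_eq_inter_range]
  have hclosV : closure V ⊆ closure (samuelEmbed X '' B) := by
    have h1 : V ⊆ closure (V ∩ Set.range (samuelEmbed X)) :=
      hdense.open_subset_closure_inter hV
    calc closure V ⊆ closure (closure (V ∩ Set.range (samuelEmbed X))) := closure_mono h1
      _ = closure (V ∩ Set.range (samuelEmbed X)) := closure_closure
      _ = closure (samuelEmbed X '' B) := by rw [Set.image_preimage_eq_inter_range]
  have hbddcl : BddBelow {r | ∃ a ∈ closure U, ∃ b ∈ closure V, r = samuelDist X a b} := by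
    refine ⟨0, ?_⟩; rintro r ⟨a, -, b, -, rfl⟩; exact samuelDist_nonneg a b
  have hbddUV : BddBelow {r | ∃ a ∈ U, ∃ b ∈ V, r = samuelDist X a b} := by
    refine ⟨0, ?_⟩; rintro r ⟨a, -, b, -, rfl⟩; exact samuelDist_nonneg a b
  have hneUV : {r | ∃ a ∈ U, ∃ b ∈ V, r = samuelDist X a b}.Nonempty :=
    ⟨samuelDist X hUne.choose hVne.choose,
      hUne.choose, hUne.choose_spec, hVne.choose, hVne.choose_spec, rfl⟩
  have hneM : {r | ∃ a ∈ A, ∃ b ∈ B, r = dist a b}.Nonempty :=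
    ⟨dist hAne.choose hBne.choose,
      hAne.choose, hAne.choose_spec, hBne.choose, hBne.choose_spec, rfl⟩
  have hnecl : {r | ∃ a ∈ closure U, ∃ b ∈ closure V, r = samuelDist X a b}.Nonempty :=
    ⟨samuelDist X hUne.choose hVne.choose,
      hUne.choose, subset_closure hUne.choose_spec,
      hVne.choose, subset_closure hVne.choose_spec, rfl⟩
  have e1 : samuelSetDist X (closure U) (closure V) ≤ samuelSetDist X U V := by
    refine csInf_le_csInf hbddcl hneUV ?_
    rintro r ⟨a, ha, b, hb, rfl⟩
    exact ⟨a, subset_closure ha, b, subset_closure hb, rfl⟩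
  have e2 : samuelSetDist X U V ≤ metricSetDist X A B := by
    refine le_csInf hneM ?_
    rintro r ⟨x, hx, y, hy, rfl⟩
    exact (csInf_le hbddUV ⟨samuelEmbed X x, hx, samuelEmbed X y, hy, rfl⟩).trans
      (samuelDist_le_dist x y)
  have e3 : metricSetDist X A B ≤ samuelSetDist X (closure U) (closure V) := by
    refine le_csInf hnecl ?_
    rintro r ⟨a, ha, b, hb, rfl⟩
    exact metric_le_samuelDist hbdd hAne hBne (hclosU ha) (hclosV hb)
  exact ⟨le_antisymm e1 (e2.trans e3), le_antisymm e2 (e3.trans e1)⟩
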